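/- The function μ(γ) = √(γ²+2γ)/(1+γ) − ln(1+γ)/((1+γ)·√(γ²+2γ)) is strictly increasing on (0, ∞). -/

import Mathlib

/-- μ(γ) = √(γ²+2γ)/(1+γ) − ln(1+γ)/((1+γ)·√(γ²+2γ)) -/
noncomputable def mu (γ : ℝ) : ℝ :=
  Real.sqrt (γ ^ 2 + 2 * γ) / (1 + γ) -
    Real.log (1 + γ) / ((1 + γ) * Real.sqrt (γ ^ 2 + 2 * γ))

lemma mu_hasDerivAt (x : ℝ) (hx : 0 < x) :
    HasDerivAt mu
      (((2 * (1 + x) ^ 2 - 1) * Real.log (1 + x)) /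
        ((1 + x) ^ 2 * Real.sqrt (x ^ 2 + 2 * x) ^ 3)) x := by
  set s := Real.sqrt (x ^ 2 + 2 * x) with hs
  have hq : (0:ℝ) < x ^ 2 + 2 * x := by nlinarith
  have hspos : 0 < s := Real.sqrt_pos.mpr hq
  have hs2 : s ^ 2 = x ^ 2 + 2 * x := Real.sq_sqrt hq.le
  have h1pos : (0:ℝ) < 1 + x := by linarith
  have h1ne : (1:ℝ) + x ≠ 0 := ne_of_gt h1pos
  have hp : HasDerivAt (fun γ : ℝ => γ ^ 2 + 2 * γ) (2 * x + 2) x := by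
    have h1 := hasDerivAt_pow 2 x
    have h2 := (hasDerivAt_id x).const_mul (2:ℝ)
    have := h1.add h2
    exact this.congr_deriv (by norm_num)
  have hsq : HasDerivAt (fun γ : ℝ => Real.sqrt (γ ^ 2 + 2 * γ)) ((2 * x + 2) / (2 * s)) x := by
    have := (Real.hasDerivAt_sqrt (ne_of_gt hq)).comp x hp
    exact this.congr_deriv (by rw [hs]; ring)
  have h1p : HasDerivAt (fun γ : ℝ => 1 + γ) 1 x := by
    simpa using (hasDerivAt_id x).const_add (1:ℝ)
  have hA : HasDerivAt (fun γ : ℝ => Real.sqrt (γ ^ 2 + 2 * γ) / (1 + γ))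
      (((2 * x + 2) / (2 * s) * (1 + x) - s * 1) / (1 + x) ^ 2) x := hsq.div h1p h1ne
  have hlog : HasDerivAt (fun γ : ℝ => Real.log (1 + γ)) (1 / (1 + x)) x := by
    have := (Real.hasDerivAt_log h1ne).comp x h1p
    exact this.congr_deriv (by ring)
  have hden : HasDerivAt (fun γ : ℝ => (1 + γ) * Real.sqrt (γ ^ 2 + 2 * γ))
      (1 * s + (1 + x) * ((2 * x + 2) / (2 * s))) x := h1p.mul hsq
  have hdne : (1 + x) * s ≠ 0 := by positivity
  have hB : HasDerivAt (fun γ : ℝ => Real.log (1 + γ) / ((1 + γ) * Real.sqrt (γ ^ 2 + 2 * γ)))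
      ((1 / (1 + x) * ((1 + x) * s) -
        Real.log (1 + x) * (1 * s + (1 + x) * ((2 * x + 2) / (2 * s)))) / ((1 + x) * s) ^ 2) x :=
    hlog.div hden hdne
  have hA' : HasDerivAt (fun γ : ℝ => Real.sqrt (γ ^ 2 + 2 * γ) / (1 + γ))
      (1 / ((1 + x) ^ 2 * s)) x := by
    convert hA using 1
    have hsne : s ≠ 0 := ne_of_gt hspos
    field_simp
    linear_combination hs2
  have hB' : HasDerivAt (fun γ : ℝ => Real.log (1 + γ) / ((1 + γ) * Real.sqrt (γ ^ 2 + 2 * γ)))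
      ((s ^ 2 - Real.log (1 + x) * (2 * (1 + x) ^ 2 - 1)) / ((1 + x) ^ 2 * s ^ 3)) x := by
    convert hB using 1
    have hsne : s ≠ 0 := ne_of_gt hspos
    field_simp
    linear_combination Real.log (1 + x) * hs2
  have hfin := hA'.sub hB'
  refine hfin.congr_deriv ?_
  have hsne : s ≠ 0 := ne_of_gt hspos
  field_simp
  ring_nf

/-- μ is strictly increasing on (0, ∞). -/
theorem stmt_9 : StrictMonoOn mu (Set.Ioi (0 : ℝ)) := by
  apply strictMonoOn_of_deriv_pos (convex_Ioi (0:ℝ))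
  · intro x hx
    exact (mu_hasDerivAt x hx).continuousAt.continuousWithinAt
  · intro x hx
    rw [interior_Ioi] at hx
    have hx0 : 0 < x := hx
    rw [(mu_hasDerivAt x hx).deriv]
    have h1 : (0:ℝ) < 1 + x := by linarith
    have hlog : 0 < Real.log (1 + x) := Real.log_pos (by linarith)
    have hs : 0 < Real.sqrt (x ^ 2 + 2 * x) := Real.sqrt_pos.mpr (by nlinarith)
    have : (0:ℝ) < 2 * (1 + x) ^ 2 - 1 := by nlinarith
    positivity
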